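/- Suppose H is a finite graph with maximum degree Δ satisfying max{hom(C_3,H)^{1/3}, hom(C_4,H)^{1/4}} < Δ. Then for every k ≥ 4 and all vertices u, v of H, the number of homomorphisms from the path P_k on k vertices to H mapping the initial vertex to u and the terminal vertex to v is strictly less than Δ^{k-2}. -/

import Mathlib

open Finset

/-- Number of graph homomorphisms from the (loopless or looped) graph given by
relation `G` on `U` to the graph given by relation `H` on `V`. -/
def HomCount {U V : Type*} [Fintype U] [DecidableEq U] [Fintype V] [DecidableEq V]
    (G : U → U → Prop) [DecidableRel G] (H : V → V → Prop) [DecidableRel H] : ℕ :=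
  Fintype.card {f : U → V // ∀ a b, G a b → H (f a) (f b)}

/-- Degree of a vertex in a graph with loops (a loop counts once). -/
def hdeg {V : Type*} [Fintype V] (H : V → V → Prop) [DecidableRel H] (v : V) : ℕ :=
  (Finset.univ.filter (H v)).card

/-- Adjacency matrix (over ℝ) of the graph with loops given by `H`. -/
def adjMat {V : Type*} [Fintype V] (H : V → V → Prop) [DecidableRel H] : Matrix V V ℝ :=
  fun i j => if H i j then 1 else 0

/-- Adjacency relation of the cycle `C_k` on vertex set `Fin k` (for `k ≥ 3`). -/
def cycAdj (k : ℕ) (i j : Fin k) : Prop :=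
  (i.val + 1) % k = j.val ∨ (j.val + 1) % k = i.val

instance (k : ℕ) : DecidableRel (cycAdj k) := fun i j => by
  unfold cycAdj; infer_instance

/-- Adjacency relation of the path `P_k` on vertex set `Fin k`. -/
def pathAdj (k : ℕ) (i j : Fin k) : Prop :=
  i.val + 1 = j.val ∨ j.val + 1 = i.val

instance (k : ℕ) : DecidableRel (pathAdj k) := fun i j => by
  unfold pathAdj; infer_instance

/-- Adjacency relation of the star `K_{1,x-1}` on `Fin x`, with center `0`. -/
def starAdj (x : ℕ) (i j : Fin x) : Prop :=
  (i.val = 0 ∧ j.val ≠ 0) ∨ (j.val = 0 ∧ i.val ≠ 0)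

instance (x : ℕ) : DecidableRel (starAdj x) := fun i j => by
  unfold starAdj; infer_instance

set_option linter.unusedSectionVars false

section Aux

lemma boole_mul_boole {p q : Prop} [Decidable p] [Decidable q] :
    (if p then (1:ℝ) else 0) * (if q then 1 else 0) = if p ∧ q then 1 else 0 := by
  by_cases hp : p <;> by_cases hq : q <;> simp [hp, hq]

variable {V : Type*} [Fintype V] [DecidableEq V] (H : V → V → Prop) [DecidableRel H]

lemma walk_sum (m : ℕ) (u v : V) :
    ((adjMat H) ^ m) u v =
      ∑ f : Fin (m + 1) → V,
        if (∀ i : Fin m, H (f i.castSucc) (f i.succ)) ∧ f 0 = u ∧ f (Fin.last m) = v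
        then (1 : ℝ) else 0 := by
  induction m generalizing u with
  | zero =>
      rw [pow_zero, ← Equiv.sum_comp (Equiv.funUnique (Fin 1) V).symm]
      simp only [Equiv.funUnique_symm_apply]
      by_cases h : u = v
      · subst h; simp [Matrix.one_apply]
      · simp only [Matrix.one_apply, if_neg h]
        rw [Finset.sum_eq_zero]
        intro x _
        rw [if_neg]
        rintro ⟨-, h1, h2⟩
        exact h (h1 ▸ h2 ▸ rfl)
  | succ m ih =>
      rw [pow_succ', Matrix.mul_apply]
      have key : ∀ w, ((adjMat H) ^ m) w v =
          ∑ g : Fin (m + 1) → V,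
            if (∀ i : Fin m, H (g i.castSucc) (g i.succ)) ∧ g 0 = w ∧ g (Fin.last m) = v
            then (1 : ℝ) else 0 := fun w => ih w
      have lhs : ∑ w, adjMat H u w * ((adjMat H) ^ m) w v =
          ∑ g : Fin (m + 1) → V,
            if (H u (g 0) ∧ ∀ i : Fin m, H (g i.castSucc) (g i.succ)) ∧ g (Fin.last m) = v
            then (1 : ℝ) else 0 := by
        simp_rw [key, Finset.mul_sum]
        rw [Finset.sum_comm]
        refine Finset.sum_congr rfl fun g _ => ?_
        rw [Finset.sum_eq_single (g 0)]
        · by_cases h1 : H u (g 0) <;> by_cases h2 : (∀ i : Fin m, H (g i.castSucc) (g i.succ))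
            <;> by_cases h3 : g (Fin.last m) = v <;>
            simp [adjMat, h1, h2, h3]
        · intro w _ hw
          rw [if_neg, mul_zero]
          rintro ⟨-, h1, -⟩
          exact hw h1.symm
        · simp
      rw [lhs]
      rw [← Equiv.sum_comp (Fin.consEquiv (fun _ : Fin (m + 2) => V)), Fintype.sum_prod_type]
      rw [Finset.sum_comm]
      refine Finset.sum_congr rfl fun g _ => ?_
      rw [Finset.sum_eq_single u]
      · congr 1
        simp only [Fin.consEquiv_apply]
        rw [eq_iff_iff]
        constructor
        · rintro ⟨h1, h3⟩
          refine ⟨?_, by simp, ?_⟩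
          · intro i
            induction i using Fin.cases with
            | zero => simpa using h1.1
            | succ j =>
                have := h1.2 j
                simpa [← Fin.succ_castSucc] using this
          · rw [← Fin.succ_last, Fin.cons_succ]; exact h3
        · rintro ⟨hchain, h0, hlast⟩
          refine ⟨⟨?_, fun i => ?_⟩, ?_⟩
          · have := hchain 0
            simpa using this
          · have := hchain i.succ
            simpa [← Fin.succ_castSucc] using this
          · rw [← Fin.succ_last, Fin.cons_succ] at hlast; exact hlast
      · intro w _ hw
        rw [if_neg]
        simp only [Fin.consEquiv_apply]
        rintro ⟨-, h1, -⟩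
        rw [Fin.cons_zero] at h1
        exact hw h1
      · simp

lemma adjMat_isHermitian (hsym : ∀ a b, H a b → H b a) : (adjMat H).IsHermitian := by
  ext i j
  simp only [Matrix.conjTranspose_apply, adjMat, star_trivial]
  by_cases h : H j i
  · rw [if_pos h, if_pos (hsym _ _ h)]
  · rw [if_neg h, if_neg fun h' => h (hsym _ _ h')]

lemma adjMat_pow_spectral (hA : (adjMat H).IsHermitian) (m : ℕ) :
    (adjMat H) ^ m = (hA.eigenvectorUnitary : Matrix V V ℝ) *
      Matrix.diagonal (fun i => hA.eigenvalues i ^ m) *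
      star (hA.eigenvectorUnitary : Matrix V V ℝ) := by
  set U : Matrix V V ℝ := (hA.eigenvectorUnitary : Matrix V V ℝ) with hU
  have hUU : U * star U = 1 := Matrix.mem_unitaryGroup_iff.mp hA.eigenvectorUnitary.2
  have hU'U : star U * U = 1 := Matrix.mem_unitaryGroup_iff'.mp hA.eigenvectorUnitary.2
  have hspec : adjMat H = U * Matrix.diagonal hA.eigenvalues * star U := by
    conv_lhs => rw [hA.spectral_theorem]
    rw [RCLike.ofReal_real_eq_id, Function.id_comp]
    rfl
  induction m with
  | zero =>
      rw [pow_zero, show (fun i : V => hA.eigenvalues i ^ 0) = fun _ => (1:ℝ) by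
        funext i; rw [pow_zero],
        show Matrix.diagonal (fun _ : V => (1:ℝ)) = 1 from Matrix.diagonal_one, mul_one, hUU]
  | succ m ih =>
      have hcollapse : ∀ X : Matrix V V ℝ, star U * (U * X) = X := fun X => by
        rw [← Matrix.mul_assoc, hU'U, Matrix.one_mul]
      have e1 : adjMat H ^ (m + 1) =
          (U * Matrix.diagonal (fun i => hA.eigenvalues i ^ m) * star U) *
            (U * Matrix.diagonal hA.eigenvalues * star U) := by
        rw [← hspec, pow_succ, ih]
      rw [e1]
      simp only [Matrix.mul_assoc]
      rw [hcollapse]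
      rw [← Matrix.mul_assoc (Matrix.diagonal fun i => hA.eigenvalues i ^ m),
        Matrix.diagonal_mul_diagonal]
      simp only [Matrix.mul_assoc, ← pow_succ]

lemma adjMat_pow_entry (hA : (adjMat H).IsHermitian) (m : ℕ) (u v : V) :
    ((adjMat H) ^ m) u v = ∑ i, hA.eigenvalues i ^ m *
      ((hA.eigenvectorUnitary : Matrix V V ℝ) u i *
        (hA.eigenvectorUnitary : Matrix V V ℝ) v i) := by
  rw [adjMat_pow_spectral H hA m, Matrix.mul_apply]
  refine Finset.sum_congr rfl fun i _ => ?_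
  rw [Matrix.mul_diagonal, Matrix.star_apply, star_trivial]
  ring

lemma adjMat_trace_pow (hA : (adjMat H).IsHermitian) (m : ℕ) :
    Matrix.trace ((adjMat H) ^ m) = ∑ i, hA.eigenvalues i ^ m := by
  rw [adjMat_pow_spectral H hA m, Matrix.trace_mul_cycle,
    Matrix.mem_unitaryGroup_iff'.mp hA.eigenvectorUnitary.2, Matrix.one_mul,
    Matrix.trace_diagonal]

lemma cyc4_iff (hsym : ∀ a b, H a b → H b a) (f : Fin 4 → V) :
    (∀ a b, cycAdj 4 a b → H (f a) (f b)) ↔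
      H (f 0) (f 1) ∧ H (f 1) (f 2) ∧ H (f 2) (f 3) ∧ H (f 3) (f 0) := by
  constructor
  · intro h
    exact ⟨h _ _ (by decide), h _ _ (by decide), h _ _ (by decide), h _ _ (by decide)⟩
  · rintro ⟨h1, h2, h3, h4⟩ a b hab
    fin_cases a <;> fin_cases b <;>
      first
        | exact absurd hab (by decide)
        | exact h1 | exact h2 | exact h3 | exact h4
        | exact hsym _ _ h1 | exact hsym _ _ h2 | exact hsym _ _ h3 | exact hsym _ _ h4

lemma homC4_eq_trace (hsym : ∀ a b, H a b → H b a) :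
    ((HomCount (cycAdj 4) H : ℝ)) = Matrix.trace ((adjMat H) ^ 4) := by
  let e : (Fin 4 → V) ≃ V × V × V × V :=
    ⟨fun f => (f 0, f 1, f 2, f 3), fun p => ![p.1, p.2.1, p.2.2.1, p.2.2.2],
      fun f => by funext i; fin_cases i <;> rfl, fun p => rfl⟩
  have hpow : (adjMat H) ^ 4 = adjMat H * (adjMat H * (adjMat H * adjMat H)) := by
    noncomm_ring
  have hcard : ((HomCount (cycAdj 4) H : ℝ)) =
      ∑ f : Fin 4 → V, if (∀ a b, cycAdj 4 a b → H (f a) (f b)) then (1:ℝ) else 0 := by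
    rw [HomCount, Fintype.card_subtype, ← Finset.sum_boole]
  rw [hcard]
  have hcond : ∀ f : Fin 4 → V,
      (if (∀ a b, cycAdj 4 a b → H (f a) (f b)) then (1:ℝ) else 0) =
        (if H (f 0) (f 1) ∧ H (f 1) (f 2) ∧ H (f 2) (f 3) ∧ H (f 3) (f 0) then (1:ℝ) else 0) :=
    fun f => if_congr (cyc4_iff H hsym f) rfl rfl
  simp_rw [hcond]
  rw [← Equiv.sum_comp e.symm]
  simp only [Fintype.sum_prod_type]
  rw [hpow]
  simp only [Matrix.trace, Matrix.diag_apply, Matrix.mul_apply, Finset.mul_sum]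
  refine Finset.sum_congr rfl fun a _ => Finset.sum_congr rfl fun b _ =>
    Finset.sum_congr rfl fun c _ => Finset.sum_congr rfl fun d _ => ?_
  show (if H a b ∧ H b c ∧ H c d ∧ H d a then (1:ℝ) else 0) = _
  by_cases h1 : H a b <;> by_cases h2 : H b c <;> by_cases h3 : H c d <;> by_cases h4 : H d a <;>
    simp [adjMat, h1, h2, h3, h4]

lemma adjMat_sq_diag (hsym : ∀ a b, H a b → H b a) (u : V) :
    ((adjMat H) ^ 2) u u = (hdeg H u : ℝ) := by
  rw [pow_two, Matrix.mul_apply, hdeg, ← Finset.sum_boole]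
  refine Finset.sum_congr rfl fun w _ => ?_
  by_cases h : H u w
  · rw [if_pos h]; simp [adjMat, h, hsym _ _ h]
  · rw [if_neg h]; simp [adjMat, h]

lemma path_iff (hsym : ∀ a b, H a b → H b a) (m : ℕ) (f : Fin (m + 1) → V) :
    (∀ a b, pathAdj (m + 1) a b → H (f a) (f b)) ↔
      ∀ i : Fin m, H (f i.castSucc) (f i.succ) := by
  constructor
  · intro h i
    exact h _ _ (Or.inl (by simp))
  · intro h a b hab
    rcases hab with hab | hab
    · have ha : a.val < m := by have := b.isLt; omega
      have e1 : a = Fin.castSucc ⟨a.val, ha⟩ := by ext; rfl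
      have e2 : b = Fin.succ ⟨a.val, ha⟩ := by ext; simp [Fin.val_succ]; omega
      rw [e1, e2]; exact h _
    · have hb : b.val < m := by have := a.isLt; omega
      have e1 : b = Fin.castSucc ⟨b.val, hb⟩ := by ext; rfl
      have e2 : a = Fin.succ ⟨b.val, hb⟩ := by ext; simp [Fin.val_succ]; omega
      rw [e1, e2]; exact hsym _ _ (h _)

end Aux

/-- if `max{hom(C₃,H)^{1/3}, hom(C₄,H)^{1/4}} < Δ`, then for every
`k ≥ 4` and vertices `u, v`, the number of homomorphisms of the path `P_k`
sending its initial vertex to `u` and its terminal vertex to `v` is strictly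
less than `Δ^{k-2}`. -/
theorem path_endpoint_hom_strict_bound {V : Type*} [Fintype V] [DecidableEq V]
    (H : V → V → Prop) [DecidableRel H] (hsym : ∀ a b, H a b → H b a)
    (hiso : ∀ v, ∃ w, H v w)
    (Δ : ℕ) (hΔ : Δ = Finset.univ.sup (hdeg H))
    (hcond : max ((HomCount (cycAdj 3) H : ℝ) ^ ((3 : ℝ)⁻¹))
        ((HomCount (cycAdj 4) H : ℝ) ^ ((4 : ℝ)⁻¹)) < (Δ : ℝ))
    (k : ℕ) (hk : 4 ≤ k) (u v : V) :
    Fintype.card {f : Fin k → V //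
        (∀ a b, pathAdj k a b → H (f a) (f b)) ∧
          f ⟨0, by omega⟩ = u ∧ f ⟨k - 1, by omega⟩ = v} < Δ ^ (k - 2) := by
  classical
  have hA : (adjMat H).IsHermitian := adjMat_isHermitian H hsym
  set μ : V → ℝ := hA.eigenvalues with hμdef
  set U : Matrix V V ℝ := (hA.eigenvectorUnitary : Matrix V V ℝ) with hUdef
  set c : ℝ := (HomCount (cycAdj 4) H : ℝ) ^ ((4:ℝ)⁻¹) with hcdef
  have hc0 : 0 ≤ c := Real.rpow_nonneg (Nat.cast_nonneg _) _
  have hcΔ : c < Δ := lt_of_le_of_lt (le_max_right _ _) hcond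
  have hΔ0 : (0:ℝ) < Δ := lt_of_le_of_lt hc0 hcΔ
  have hc4 : c ^ (4:ℕ) = (HomCount (cycAdj 4) H : ℝ) := by
    rw [hcdef, show ((4:ℝ)⁻¹) = (((4:ℕ):ℝ))⁻¹ by norm_num]
    exact Real.rpow_inv_natCast_pow (Nat.cast_nonneg _) (by norm_num)
  have hsum4 : (∑ i, μ i ^ 4) = c ^ (4:ℕ) := by
    rw [hc4, homC4_eq_trace H hsym, adjMat_trace_pow H hA]
  have habs : ∀ i, |μ i| ≤ c := by
    intro i
    have h1 : μ i ^ 4 ≤ ∑ j, μ j ^ 4 :=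
      Finset.single_le_sum (f := fun j => μ j ^ 4) (fun j _ => by positivity)
        (Finset.mem_univ i)
    have h2 : |μ i| ^ 4 ≤ c ^ 4 := by
      rw [pow_abs, abs_of_nonneg (by positivity : (0:ℝ) ≤ μ i ^ 4)]
      rw [hsum4] at h1; exact h1
    exact le_of_pow_le_pow_left₀ (by norm_num) hc0 h2
  have hdegΔ : ∀ w : V, ((adjMat H) ^ 2) w w ≤ (Δ : ℝ) := by
    intro w
    rw [adjMat_sq_diag H hsym w]
    exact_mod_cast Nat.cast_le.mpr (hΔ ▸ Finset.le_sup (Finset.mem_univ w))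
  obtain ⟨m, rfl⟩ : ∃ m, k = m + 1 := ⟨k - 1, by omega⟩
  have hm : 3 ≤ m := by omega
  have hcard : (Fintype.card {f : Fin (m + 1) → V //
      (∀ a b, pathAdj (m + 1) a b → H (f a) (f b)) ∧
        f ⟨0, by omega⟩ = u ∧ f ⟨m + 1 - 1, by omega⟩ = v} : ℝ)
      = ((adjMat H) ^ m) u v := by
    rw [Fintype.card_subtype, ← Finset.sum_boole, walk_sum H m u v]
    refine Finset.sum_congr rfl fun f _ => ?_
    refine if_congr ?_ rfl rfl
    exact and_congr (path_iff H hsym m f) Iff.rfl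
  -- Cauchy–Schwarz step
  have hsq : ∀ w : V, (∑ i, (|μ i| * |U w i|) ^ 2) = ((adjMat H) ^ 2) w w := by
    intro w
    rw [adjMat_pow_entry H hA 2 w w]
    refine Finset.sum_congr rfl fun i _ => ?_
    rw [mul_pow, sq_abs, sq_abs]
    ring
  have step2 : ∑ i, (|μ i| * |U u i|) * (|μ i| * |U v i|) ≤ (Δ:ℝ) := by
    have hnn : (0:ℝ) ≤ ∑ i, (|μ i| * |U u i|) * (|μ i| * |U v i|) :=
      Finset.sum_nonneg fun i _ => by positivity
    have CS := Finset.sum_mul_sq_le_sq_mul_sq Finset.univ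
      (fun i => |μ i| * |U u i|) (fun i => |μ i| * |U v i|)
    have h1 : (∑ i, (|μ i| * |U u i|) * (|μ i| * |U v i|)) ^ 2 ≤ (Δ:ℝ) * Δ := by
      refine le_trans CS ?_
      have hu := (hsq u) ▸ hdegΔ u
      have hv := (hsq v) ▸ hdegΔ v
      exact mul_le_mul hu hv (Finset.sum_nonneg fun i _ => by positivity) hΔ0.le
    nlinarith [h1, hnn, hΔ0]
  have key : ((adjMat H) ^ m) u v ≤ c ^ (m - 2) * (Δ:ℝ) := by
    rw [adjMat_pow_entry H hA m u v]
    have step1 : ∑ i, μ i ^ m * (U u i * U v i) ≤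
        ∑ i, c ^ (m - 2) * ((|μ i| * |U u i|) * (|μ i| * |U v i|)) := by
      refine Finset.sum_le_sum fun i _ => ?_
      have hsplit : |μ i| ^ m = |μ i| ^ (m - 2) * |μ i| ^ 2 := by
        rw [← pow_add]; congr 1; omega
      calc μ i ^ m * (U u i * U v i) ≤ |μ i ^ m * (U u i * U v i)| := le_abs_self _
        _ = |μ i| ^ m * (|U u i| * |U v i|) := by
            rw [abs_mul, abs_mul, abs_pow]
        _ = |μ i| ^ (m - 2) * ((|μ i| * |U u i|) * (|μ i| * |U v i|)) := by
            rw [hsplit]; ring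
        _ ≤ c ^ (m - 2) * ((|μ i| * |U u i|) * (|μ i| * |U v i|)) := by
            refine mul_le_mul_of_nonneg_right
              (pow_le_pow_left₀ (abs_nonneg _) (habs i) _) (by positivity)
    refine le_trans step1 ?_
    rw [← Finset.mul_sum]
    exact mul_le_mul_of_nonneg_left step2 (by positivity)
  have hlt : c ^ (m - 2) * (Δ:ℝ) < (Δ:ℝ) ^ (m - 1) := by
    have h1 : c ^ (m - 2) < (Δ:ℝ) ^ (m - 2) :=
      pow_lt_pow_left₀ hcΔ hc0 (by omega)
    calc c ^ (m - 2) * (Δ:ℝ) < (Δ:ℝ) ^ (m - 2) * Δ := by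
          exact mul_lt_mul_of_pos_right h1 hΔ0
      _ = (Δ:ℝ) ^ (m - 1) := by rw [← pow_succ]; congr 1; omega
  have final : (Fintype.card {f : Fin (m + 1) → V //
      (∀ a b, pathAdj (m + 1) a b → H (f a) (f b)) ∧
        f ⟨0, by omega⟩ = u ∧ f ⟨m + 1 - 1, by omega⟩ = v} : ℝ) < (Δ:ℝ) ^ (m - 1) :=
    lt_of_le_of_lt (hcard ▸ key) hlt
  have : m + 1 - 2 = m - 1 := by omega
  rw [this]
  exact_mod_cast final
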